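/- For every real number r > 0, the set M_r ⊆ ℂ² is convex, balanced and absorbent, and for every v ≠ 0 there is ω > 0 with ω'·v ∉ M_r for all ω' ≥ ω (M_r is locally bounded); consequently the Minkowski functional ‖v‖_r := inf{η > 0 : η⁻¹·v ∈ M_r} (with ‖0‖_r := 0) is a norm on the complex vector space ℂ². -/

import Mathlib

/-- The four-element set `S_r = {(1,0), (0,1), (r,−r), (r,−i·r)} ⊆ ℂ²`. -/
def Sr (r : ℝ) : Set (ℂ × ℂ) :=
  {((1 : ℂ), (0 : ℂ)), ((0 : ℂ), (1 : ℂ)), (((r : ℝ) : ℂ), -((r : ℝ) : ℂ)),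
    (((r : ℝ) : ℂ), -(Complex.I * ((r : ℝ) : ℂ)))}

/-- `twist S = {e^{iφ}·x : φ ∈ ℝ, x ∈ S}`. -/
def twist (S : Set (ℂ × ℂ)) : Set (ℂ × ℂ) :=
  {x | ∃ (φ : ℝ) (y : ℂ × ℂ), y ∈ S ∧ x = Complex.exp (Complex.I * (φ : ℂ)) • y}

/-- `M_r = conv(twist(S_r))`, the convex hull taken over `ℝ`. -/
noncomputable def Mr (r : ℝ) : Set (ℂ × ℂ) := convexHull ℝ (twist (Sr r))

open Set Complex

lemma exp_smul_mem_twist {S : Set (ℂ × ℂ)} {y : ℂ × ℂ} (hy : y ∈ S) (φ : ℝ) :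
    Complex.exp (Complex.I * (φ : ℂ)) • y ∈ twist S := ⟨φ, y, hy, rfl⟩

lemma self_subset_twist (S : Set (ℂ × ℂ)) : S ⊆ twist S := fun y hy => by
  have := exp_smul_mem_twist hy 0
  simpa using this

lemma rot_mem_Mr {r : ℝ} {x : ℂ × ℂ} (hx : x ∈ Mr r) (φ : ℝ) :
    Complex.exp (Complex.I * (φ : ℂ)) • x ∈ Mr r := by
  set c := Complex.exp (Complex.I * (φ : ℂ)) with hc
  have hlin : IsLinearMap ℝ (fun z : ℂ × ℂ => c • z) :=
    ⟨smul_add c, fun a z => smul_comm c a z⟩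
  have h1 : c • x ∈ (fun z : ℂ × ℂ => c • z) '' (convexHull ℝ (twist (Sr r))) :=
    ⟨x, hx, rfl⟩
  rw [hlin.image_convexHull] at h1
  refine convexHull_mono ?_ h1
  rintro _ ⟨z, ⟨ψ, y, hy, rfl⟩, rfl⟩
  refine ⟨φ + ψ, y, hy, ?_⟩
  show c • Complex.exp (Complex.I * (ψ:ℂ)) • y = _
  rw [hc, smul_smul, ← Complex.exp_add]
  congr 2
  push_cast; ring

lemma zero_mem_Mr (r : ℝ) : (0 : ℂ × ℂ) ∈ Mr r := by
  have h1 : ((1 : ℂ), (0 : ℂ)) ∈ Mr r :=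
    subset_convexHull ℝ _ (self_subset_twist _ (by left; rfl))
  have h2 : Complex.exp (Complex.I * ((Real.pi : ℝ) : ℂ)) • ((1 : ℂ), (0 : ℂ)) ∈ Mr r :=
    rot_mem_Mr h1 Real.pi
  have hexp : Complex.exp (Complex.I * ((Real.pi : ℝ) : ℂ)) = -1 := by
    rw [mul_comm]; exact Complex.exp_pi_mul_I
  rw [hexp] at h2
  have := (convex_convexHull ℝ (twist (Sr r))) h1 h2
    (by norm_num : (0:ℝ) ≤ (1/2 : ℝ)) (by norm_num : (0:ℝ) ≤ (1/2 : ℝ)) (by norm_num)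
  simp at this; exact this

lemma star_mem_Mr {r : ℝ} {x : ℂ × ℂ} (hx : x ∈ Mr r) {t : ℝ} (ht0 : 0 ≤ t) (ht1 : t ≤ 1) :
    t • x ∈ Mr r :=
  ((convex_convexHull ℝ _).starConvex (zero_mem_Mr r)).smul_mem hx ht0 ht1

lemma disk_mem_Mr {r : ℝ} {x : ℂ × ℂ} (hx : x ∈ Mr r) {z : ℂ} (hz : ‖z‖ ≤ 1) :
    z • x ∈ Mr r := by
  have key : z = (‖z‖ : ℝ) • Complex.exp (Complex.I * ((Complex.arg z : ℝ) : ℂ)) := by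
    rw [Complex.real_smul, mul_comm Complex.I]
    exact (Complex.norm_mul_exp_arg_mul_I z).symm
  rw [key, smul_assoc]
  exact star_mem_Mr (rot_mem_Mr hx _) (norm_nonneg z) hz

lemma ball_subset_Mr {r : ℝ} (hr : 0 < r) : Metric.ball (0 : ℂ × ℂ) (1/2) ⊆ Mr r := by
  rintro ⟨a, b⟩ hab
  rw [Metric.mem_ball, dist_zero_right, Prod.norm_def] at hab
  have ha : ‖2 * a‖ ≤ 1 := by
    have := (le_max_left ‖a‖ ‖b‖).trans_lt hab
    rw [norm_mul]
    simp only [Complex.norm_two]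
    linarith
  have hb : ‖2 * b‖ ≤ 1 := by
    have := (le_max_right ‖a‖ ‖b‖).trans_lt hab
    rw [norm_mul]
    simp only [Complex.norm_two]
    linarith
  have h1 : (2*a) • ((1 : ℂ), (0 : ℂ)) ∈ Mr r :=
    disk_mem_Mr (subset_convexHull ℝ _ (self_subset_twist _ (by left; rfl))) ha
  have h2 : (2*b) • ((0 : ℂ), (1 : ℂ)) ∈ Mr r :=
    disk_mem_Mr (subset_convexHull ℝ _ (self_subset_twist _ (by right; left; rfl))) hb
  have := (convex_convexHull ℝ (twist (Sr r))) h1 h2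
    (by norm_num : (0:ℝ) ≤ (1/2 : ℝ)) (by norm_num : (0:ℝ) ≤ (1/2 : ℝ)) (by norm_num)
  have heq : (1/2 : ℝ) • ((2*a) • ((1 : ℂ), (0 : ℂ))) + (1/2 : ℝ) • ((2*b) • ((0 : ℂ), (1 : ℂ)))
      = ((a : ℂ), (b : ℂ)) := by
    simp only [Prod.smul_mk, smul_eq_mul, Prod.mk_add_mk, Complex.real_smul, mul_zero, mul_one]
    push_cast
    rw [Prod.mk.injEq]; constructor <;> ring
  rwa [heq] at this

lemma Mr_subset_ball {r : ℝ} (hr : 0 < r) :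
    Mr r ⊆ Metric.closedBall (0 : ℂ × ℂ) (max 1 r) := by
  refine convexHull_min ?_ (convex_closedBall _ _)
  rintro _ ⟨φ, y, hy, rfl⟩
  rw [Metric.mem_closedBall, dist_zero_right, norm_smul]
  have h1 : ‖Complex.exp (Complex.I * (φ : ℂ))‖ = 1 := by
    rw [mul_comm]
    exact Complex.norm_exp_ofReal_mul_I φ
  rw [h1, one_mul]
  have habsr : ‖((r : ℝ) : ℂ)‖ = r := by
    rw [Complex.norm_real, Real.norm_eq_abs, abs_of_pos hr]
  rcases hy with h | h | h | h <;> subst h <;>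
    simp only [Prod.norm_def, norm_neg, norm_mul, norm_one,
      norm_zero, Complex.norm_I, habsr, one_mul] <;>
  · first
    | exact max_le_max (le_refl 1) hr.le |>.trans (by simp) 
    | simp [le_max_iff]

/-- for `r > 0` the set `M_r` is convex, balanced, absorbent and locally bounded,
and its Minkowski functional (gauge) is a norm on the complex vector space `ℂ²`. -/
theorem stmt5 (r : ℝ) (hr : 0 < r) :
    Convex ℝ (Mr r) ∧
    (∀ x ∈ Mr r, ∀ φ : ℝ, Complex.exp (Complex.I * (φ : ℂ)) • x ∈ Mr r) ∧
    (∀ v : ℂ × ℂ, v ≠ 0 → ∃ ε : ℝ, 0 < ε ∧ ε • v ∈ Mr r) ∧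
    (∀ v : ℂ × ℂ, v ≠ 0 → ∃ ω : ℝ, 0 < ω ∧ ∀ ω' : ℝ, ω ≤ ω' → ω' • v ∉ Mr r) ∧
    gauge (Mr r) 0 = 0 ∧
    (∀ v : ℂ × ℂ, gauge (Mr r) v = 0 ↔ v = 0) ∧
    (∀ (z : ℂ) (v : ℂ × ℂ), gauge (Mr r) (z • v) = ‖z‖ * gauge (Mr r) v) ∧
    (∀ v w : ℂ × ℂ, gauge (Mr r) (v + w) ≤ gauge (Mr r) v + gauge (Mr r) w) := by
  have hconv : Convex ℝ (Mr r) := convex_convexHull ℝ _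
  have hnhds : Mr r ∈ nhds (0 : ℂ × ℂ) :=
    Filter.mem_of_superset (Metric.ball_mem_nhds 0 (by norm_num)) (ball_subset_Mr hr)
  have habs : Absorbent ℝ (Mr r) := absorbent_nhds_zero hnhds
  have hbdd : Bornology.IsVonNBounded ℝ (Mr r) :=
    (NormedSpace.isVonNBounded_closedBall ℝ (ℂ × ℂ) (max 1 r)).subset (Mr_subset_ball hr)
  have hbal : Balanced ℂ (Mr r) := by
    intro a ha
    rintro _ ⟨x, hx, rfl⟩
    exact disk_mem_Mr hx ha
  refine ⟨hconv, fun x hx φ => rot_mem_Mr hx φ, ?_, ?_, gauge_zero,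
    fun v => gauge_eq_zero habs hbdd, fun z v => by rw [gauge_smul hbal],
    gauge_add_le hconv habs⟩
  · intro v hv
    have hv' : 0 < ‖v‖ := norm_pos_iff.2 hv
    refine ⟨1 / (4 * ‖v‖), by positivity, ball_subset_Mr hr ?_⟩
    rw [Metric.mem_ball, dist_zero_right, norm_smul, Real.norm_eq_abs,
      abs_of_pos (by positivity)]
    rw [div_mul_eq_mul_div, one_mul, div_lt_iff₀ (by positivity)]
    nlinarith
  · intro v hv
    have hv' : 0 < ‖v‖ := norm_pos_iff.2 hv
    refine ⟨(max 1 r + 1) / ‖v‖, by positivity, fun ω' hω' hmem => ?_⟩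
    have h1 : ‖ω' • v‖ ≤ max 1 r := by
      have := Mr_subset_ball hr hmem
      rwa [Metric.mem_closedBall, dist_zero_right] at this
    have h2 : (max 1 r + 1) ≤ ‖ω' • v‖ := by
      rw [norm_smul, Real.norm_eq_abs]
      have hω'pos : 0 < ω' := lt_of_lt_of_le (by positivity) hω'
      rw [abs_of_pos hω'pos]
      calc max 1 r + 1 = ((max 1 r + 1) / ‖v‖) * ‖v‖ := by field_simp
        _ ≤ ω' * ‖v‖ := by nlinarith
    linarith [lt_of_lt_of_le (by linarith : max 1 r < max 1 r + 1) h2]
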